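/- arXiv:0712.1006 — 2 statements merged into one kernel-verified Lean document; each statement's English description precedes it below -/
import Mathlib

section
/- Let μ be a finite positive measure on T*ℝ^d = ℝ^d × ℝ^d that is invariant under the translation flow φ_s(x,ξ) = (x + sξ, ξ) for every s ∈ ℝ, and suppose μ({(x,ξ) : ξ = 0}) = 0. Then μ = 0. -/
open MeasureTheory

/-- A finite positive measure on T*ℝ^d = ℝ^d × ℝ^d invariant under the translation
(geodesic) flow φ_s(x,ξ) = (x + sξ, ξ) and giving no mass to {ξ = 0} must vanish. -/
theorem stmt0 (d : ℕ) (μ : Measure ((Fin d → ℝ) × (Fin d → ℝ)))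
    [IsFiniteMeasure μ]
    (hinv : ∀ s : ℝ, ∀ A : Set ((Fin d → ℝ) × (Fin d → ℝ)), MeasurableSet A →
      μ ((fun p : (Fin d → ℝ) × (Fin d → ℝ) => (p.1 + s • p.2, p.2)) '' A) = μ A)
    (hzero : μ {p : (Fin d → ℝ) × (Fin d → ℝ) | p.2 = 0} = 0) :
    μ = 0 := by
  have hnorm1 : Measurable fun p : (Fin d → ℝ) × (Fin d → ℝ) => ‖p.1‖ :=
    (continuous_norm.comp continuous_fst).measurable
  have hnorm2 : Measurable fun p : (Fin d → ℝ) × (Fin d → ℝ) => ‖p.2‖ :=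
    (continuous_norm.comp continuous_snd).measurable
  -- key step: boxes away from ξ = 0 have measure zero
  have key : ∀ R ε : ℝ, 0 < ε →
      μ {p : (Fin d → ℝ) × (Fin d → ℝ) | ‖p.1‖ ≤ R ∧ ε ≤ ‖p.2‖} = 0 := by
    intro R ε hε
    set B : Set ((Fin d → ℝ) × (Fin d → ℝ)) := {p | ‖p.1‖ ≤ R ∧ ε ≤ ‖p.2‖} with hBdef
    have hBm : MeasurableSet B :=
      (measurableSet_le hnorm1 measurable_const).inter
        (measurableSet_le measurable_const hnorm2)
    set s : ℕ → ℝ := fun n => n * (2 * |R| + 1) / ε with hsdef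
    set C : ℕ → Set ((Fin d → ℝ) × (Fin d → ℝ)) :=
      fun n => {p | ‖p.1 - s n • p.2‖ ≤ R ∧ ε ≤ ‖p.2‖} with hCdef
    have hCm : ∀ n, MeasurableSet (C n) := by
      intro n
      exact (measurableSet_le ((continuous_norm.comp
          (continuous_fst.sub (by fun_prop :
            Continuous fun p : (Fin d → ℝ) × (Fin d → ℝ) => s n • p.2))).measurable)
          measurable_const).inter (measurableSet_le measurable_const hnorm2)
    have himg : ∀ n, (fun p : (Fin d → ℝ) × (Fin d → ℝ) =>
        (p.1 + s n • p.2, p.2)) '' B = C n := by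
      intro n
      ext q
      constructor
      · rintro ⟨p, ⟨h1, h2⟩, rfl⟩
        refine ⟨?_, h2⟩
        simpa using h1
      · rintro ⟨h1, h2⟩
        exact ⟨(q.1 - s n • q.2, q.2), ⟨h1, h2⟩, by simp⟩
    have hμC : ∀ n, μ (C n) = μ B := by
      intro n
      rw [← himg n]
      exact hinv (s n) B hBm
    have hdisj : Pairwise (Function.onFun Disjoint C) := by
      intro n m hnm
      rw [Function.onFun, Set.disjoint_left]
      rintro p ⟨h1, h2⟩ ⟨h1', h2'⟩
      have hdiff : ‖(s n - s m) • p.2‖ ≤ 2 * |R| := by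
        have : (s n - s m) • p.2 = (p.1 - s m • p.2) - (p.1 - s n • p.2) := by
          rw [sub_smul]; abel
        rw [this]
        calc ‖(p.1 - s m • p.2) - (p.1 - s n • p.2)‖
            ≤ ‖p.1 - s m • p.2‖ + ‖p.1 - s n • p.2‖ := norm_sub_le _ _
          _ ≤ |R| + |R| := add_le_add (h1'.trans (le_abs_self R))
              (h1.trans (le_abs_self R))
          _ = 2 * |R| := by ring
      have hsep : 2 * |R| + 1 ≤ |s n - s m| * ‖p.2‖ := by
        have h1le : (1 : ℝ) ≤ |(n : ℝ) - (m : ℝ)| := by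
          have : (n : ℤ) ≠ (m : ℤ) := by exact_mod_cast hnm
          have := Int.one_le_abs (sub_ne_zero.mpr this)
          calc (1:ℝ) ≤ |((n : ℤ) : ℝ) - ((m : ℤ) : ℝ)| := by
                rw [← Int.cast_sub, ← Int.cast_abs]; exact_mod_cast this
            _ = |(n : ℝ) - (m : ℝ)| := by push_cast; ring_nf
        have hsnm : |s n - s m| = |(n : ℝ) - m| * (2 * |R| + 1) / ε := by
          rw [hsdef]
          rw [div_sub_div_same, ← sub_mul, abs_div, abs_mul,
            abs_of_pos hε, abs_of_pos (by positivity : (0:ℝ) < 2 * |R| + 1)]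
        calc 2 * |R| + 1 = 1 * ((2 * |R| + 1) / ε) * ε := by field_simp
          _ ≤ |(n : ℝ) - m| * ((2 * |R| + 1) / ε) * ‖p.2‖ := by
              exact mul_le_mul (mul_le_mul_of_nonneg_right h1le (by positivity))
                h2 (le_of_lt hε) (by positivity)
          _ = |s n - s m| * ‖p.2‖ := by rw [hsnm]; ring
      rw [norm_smul, Real.norm_eq_abs] at hdiff
      linarith
    by_contra hμ
    have hB0 : μ B ≠ 0 := hμ
    have htsum : (∑' n : ℕ, μ (C n)) = μ (⋃ n, C n) := (measure_iUnion hdisj hCm).symm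
    have : (⊤ : ENNReal) ≤ μ Set.univ := by
      calc (⊤ : ENNReal) = ∑' _ : ℕ, μ B := (ENNReal.tsum_const_eq_top_of_ne_zero hB0).symm
        _ = ∑' n : ℕ, μ (C n) := by simp_rw [hμC]
        _ = μ (⋃ n, C n) := htsum
        _ ≤ μ Set.univ := measure_mono (Set.subset_univ _)
    exact (measure_lt_top μ Set.univ).not_ge this
  -- cover the whole space
  have hcover : Set.univ ⊆ {p : (Fin d → ℝ) × (Fin d → ℝ) | p.2 = 0} ∪
      ⋃ (n : ℕ) (m : ℕ), {p : (Fin d → ℝ) × (Fin d → ℝ) |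
        ‖p.1‖ ≤ n ∧ 1 / (m + 1) ≤ ‖p.2‖} := by
    intro p _
    by_cases hp : p.2 = 0
    · exact Or.inl hp
    · right
      have hpos : 0 < ‖p.2‖ := norm_pos_iff.mpr hp
      obtain ⟨n, hn⟩ := exists_nat_ge ‖p.1‖
      obtain ⟨m, hm⟩ := exists_nat_one_div_lt hpos
      exact Set.mem_iUnion.mpr ⟨n, Set.mem_iUnion.mpr ⟨m, hn, le_of_lt hm⟩⟩
  have : μ Set.univ = 0 := by
    refine le_antisymm ?_ zero_le
    calc μ Set.univ ≤ μ ({p : (Fin d → ℝ) × (Fin d → ℝ) | p.2 = 0} ∪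
          ⋃ (n : ℕ) (m : ℕ), {p : (Fin d → ℝ) × (Fin d → ℝ) |
            ‖p.1‖ ≤ n ∧ 1 / (m + 1) ≤ ‖p.2‖}) := measure_mono hcover
      _ ≤ μ {p : (Fin d → ℝ) × (Fin d → ℝ) | p.2 = 0} +
          μ (⋃ (n : ℕ) (m : ℕ), {p : (Fin d → ℝ) × (Fin d → ℝ) |
            ‖p.1‖ ≤ n ∧ 1 / (m + 1) ≤ ‖p.2‖}) := measure_union_le _ _
      _ ≤ 0 + ∑' (n : ℕ), ∑' (m : ℕ), μ {p : (Fin d → ℝ) × (Fin d → ℝ) |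
            ‖p.1‖ ≤ n ∧ 1 / (m + 1) ≤ ‖p.2‖} := by
          rw [hzero]
          gcongr
          exact (measure_iUnion_le _).trans (by gcongr; exact measure_iUnion_le _)
      _ = 0 := by
          have h : ∀ (n m : ℕ), μ {p : (Fin d → ℝ) × (Fin d → ℝ) |
              ‖p.1‖ ≤ n ∧ 1 / (m + 1) ≤ ‖p.2‖} = 0 :=
            fun n m => key n (1 / (m + 1)) (by positivity)
          simp only [h, tsum_zero, zero_add]
  exact Measure.measure_univ_eq_zero.mp this
end

section
/- Let μ be a finite positive measure on the cotangent bundle of the flat torus, T^d × ℝ^d, invariant under the geodesic flow φ_s(x,ξ) = (x + sξ mod 2πℤ^d, ξ). If a ∈ C_c(T^d × ℝ^d) and μ gives no mass to T^d × Ω, where Ω = {ξ ∈ ℝ^d : k·ξ = 0 for some nonzero k ∈ ℤ^d}, then ∫ a dμ = ∫ ā dμ where ā(ξ) := (2π)^{-d} ∫_{T^d} a(y,ξ) dy. -/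
open MeasureTheory Filter Topology Set intervalIntegral

instance : Fact (0 < 2 * Real.pi) := ⟨by positivity⟩

noncomputable section
variable {d : ℕ}

abbrev Tor (d : ℕ) := Fin d → AddCircle (2 * Real.pi)

def ek (k : Fin d → ℤ) : C(Tor d, ℂ) :=
  ⟨fun x => ∏ i, fourier (k i) (x i),
   continuous_finset_prod _ fun i _ => (fourier (k i)).continuous.comp (continuous_apply i)⟩

lemma ek_apply (k : Fin d → ℤ) (x : Tor d) : ek k x = ∏ i, fourier (k i) (x i) := rfl

lemma ek_zero : ek (0 : Fin d → ℤ) = 1 := by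
  ext x; simp [ek_apply, fourier_zero]

lemma ek_mul (k l : Fin d → ℤ) : ek k * ek l = ek (k + l) := by
  ext x
  simp only [ContinuousMap.mul_apply, ek_apply, ← Finset.prod_mul_distrib]
  exact Finset.prod_congr rfl fun i _ => (fourier_add (m := k i) (n := l i)).symm

lemma ek_star (k : Fin d → ℤ) : star (ek k) = ek (-k) := by
  ext x
  simp only [ContinuousMap.star_apply, ek_apply, Pi.neg_apply]
  rw [show (star (∏ i : Fin d, (fourier (k i)) (x i)) : ℂ)
      = ∏ i : Fin d, (starRingEnd ℂ) ((fourier (k i)) (x i)) from map_prod (starRingEnd ℂ) _ _]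
  exact Finset.prod_congr rfl fun i _ => (fourier_neg (n := k i)).symm

lemma norm_ek (k : Fin d → ℤ) (x : Tor d) : ‖ek k x‖ = 1 := by
  rw [ek_apply, norm_prod]
  simp [fourier_apply, Circle.norm_coe]

lemma fourier_pt_add {T : ℝ} (n : ℤ) (x y : AddCircle T) :
    fourier n (x + y) = fourier n x * fourier n y := by
  simp_rw [fourier_apply, smul_add, AddCircle.toCircle_add, Circle.coe_mul]

lemma fourier_real_coe (n : ℤ) (r : ℝ) :
    fourier n ((r : ℝ) : AddCircle (2 * Real.pi)) = Complex.exp ((Complex.I * n) * r) := by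
  rw [fourier_coe_apply]
  congr 1
  have hπ : (Real.pi : ℂ) ≠ 0 := by simpa using Real.pi_ne_zero
  field_simp
  push_cast
  ring

lemma integral_fourier_zero {n : ℤ} (hn : n ≠ 0) :
    ∫ y : AddCircle (2 * Real.pi), fourier n y = 0 := by
  have hc : (Complex.I * n) ≠ 0 :=
    mul_ne_zero Complex.I_ne_zero (by exact_mod_cast hn)
  rw [← AddCircle.intervalIntegral_preimage (2 * Real.pi) 0, zero_add]
  rw [intervalIntegral.integral_congr (g := fun x : ℝ => Complex.exp ((Complex.I * n) * x))
    (fun x _ => fourier_real_coe n x)]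
  rw [integral_exp_mul_complex hc]
  rw [show (Complex.I * n) * ((2 : ℝ) * Real.pi : ℝ) = n * (2 * Real.pi * Complex.I) by
    push_cast; ring]
  rw [Complex.exp_int_mul_two_pi_mul_I]
  simp

lemma integral_ek {k : Fin d → ℤ} (hk : k ≠ 0) : ∫ y : Tor d, ek k y = 0 := by
  have h := MeasureTheory.integral_fintype_prod_eq_prod (𝕜 := ℂ) (ι := Fin d)
    (fun i (y : AddCircle (2 * Real.pi)) => fourier (k i) y) (μ := fun _ => volume)
  simp only [ek_apply]
  rw [show (volume : Measure (Tor d)) = Measure.pi (fun _ => volume) from rfl, h]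
  obtain ⟨i, hi⟩ := Function.ne_iff.mp hk
  exact Finset.prod_eq_zero (Finset.mem_univ i) (integral_fourier_zero hi)

lemma vol_tor : (volume (univ : Set (Tor d))).toReal = (2 * Real.pi) ^ d := by
  have : (volume : Measure (Tor d)) univ = (ENNReal.ofReal (2 * Real.pi)) ^ d := by
    rw [show (volume : Measure (Tor d)) = Measure.pi (fun _ => volume) from rfl,
      Measure.pi_univ]
    simp [AddCircle.measure_univ]
  rw [this]
  rw [ENNReal.toReal_pow, ENNReal.toReal_ofReal (by positivity)]

def ekMonoid (d : ℕ) : Submonoid C(Tor d, ℂ) where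
  carrier := Set.range (ek (d := d))
  one_mem' := ⟨0, ek_zero⟩
  mul_mem' := by
    rintro _ _ ⟨k, rfl⟩ ⟨l, rfl⟩
    exact ⟨k + l, (ek_mul k l).symm⟩

lemma star_range_ek : star (Set.range (ek (d := d))) = Set.range (ek (d := d)) := by
  ext f
  simp only [Set.mem_star, Set.mem_range]
  constructor
  · rintro ⟨k, hk⟩
    exact ⟨-k, by rw [← ek_star, hk, star_star]⟩
  · rintro ⟨k, rfl⟩
    exact ⟨-k, (ek_star k).symm⟩

lemma ek_single (i : Fin d) (z : Tor d) :
    ek (Pi.single i 1) z = AddCircle.toCircle (z i) := by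
  rw [ek_apply, Finset.prod_eq_single i
    (fun j _ hj => by rw [Pi.single_eq_of_ne hj]; exact fourier_zero)
    (fun h => absurd (Finset.mem_univ i) h)]
  rw [Pi.single_eq_same, fourier_one]

lemma ek_dense (f : C(Tor d, ℂ)) :
    f ∈ closure ((Submodule.span ℂ (Set.range (ek (d := d)))) : Set C(Tor d, ℂ)) := by
  have hsep : (StarAlgebra.adjoin ℂ (Set.range (ek (d := d)))).SeparatesPoints := by
    intro x y hxy
    obtain ⟨i, hi⟩ := Function.ne_iff.mp hxy
    refine ⟨_, ⟨ek (Pi.single i 1), StarAlgebra.subset_adjoin ℂ _ ⟨_, rfl⟩, rfl⟩, ?_⟩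
    show (ek (Pi.single i 1) : C(Tor d, ℂ)) x ≠ ek (Pi.single i 1) y
    rw [ek_single, ek_single]
    intro h
    exact hi (AddCircle.injective_toCircle (by positivity : (0:ℝ) < 2 * Real.pi).ne'
      (Subtype.coe_injective h))
  have htop := ContinuousMap.starSubalgebra_topologicalClosure_eq_top_of_separatesPoints _ hsep
  have hf : f ∈ closure ((StarAlgebra.adjoin ℂ (Set.range (ek (d := d)))) : Set _) := by
    have : f ∈ (StarAlgebra.adjoin ℂ (Set.range (ek (d := d)))).topologicalClosure := by
      rw [htop]; trivial
    exact this
  refine closure_mono ?_ hf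
  intro g hg
  have h1 : g ∈ Algebra.adjoin ℂ (Set.range (ek (d := d))) := by
    have : (StarAlgebra.adjoin ℂ (Set.range (ek (d := d)))).toSubalgebra
        = Algebra.adjoin ℂ (Set.range (ek (d := d))) := by
      rw [StarAlgebra.adjoin_toSubalgebra, star_range_ek, Set.union_self]
    rw [← this]
    exact hg
  have h2 := Algebra.adjoin_eq_span ℂ (Set.range (ek (d := d)))
  have h3 : g ∈ Submodule.span ℂ ((Submonoid.closure (Set.range (ek (d := d)))) : Set _) := by
    rw [← h2]; exact h1
  rwa [show Submonoid.closure (Set.range (ek (d := d))) = ekMonoid d from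
    Submonoid.closure_eq (ekMonoid d)] at h3

section Orbit
variable (ξ : Fin d → ℝ) (x : Tor d)

def orb (s : ℝ) : Tor d := x + fun i => ((s * ξ i : ℝ) : AddCircle (2 * Real.pi))

lemma continuous_orb : Continuous (orb ξ x) := by
  apply continuous_const.add
  exact continuous_pi fun i =>
    (AddCircle.continuous_mk' _).comp (continuous_id.mul continuous_const)

def Phi (n : ℕ) (f : C(Tor d, ℂ)) : ℂ :=
  (n : ℂ)⁻¹ * ∫ s in (0:ℝ)..(n:ℝ), f (orb ξ x s)

lemma intInt (f : C(Tor d, ℂ)) (n : ℕ) :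
    IntervalIntegrable (fun s => f (orb ξ x s)) volume 0 n :=
  (f.continuous.comp (continuous_orb ξ x)).intervalIntegrable _ _

def Mf (f : C(Tor d, ℂ)) : ℂ := (((2 * Real.pi) ^ d : ℝ) : ℂ)⁻¹ * ∫ y, f y

lemma cm_integrable (f : C(Tor d, ℂ)) : Integrable (fun y : Tor d => f y) volume :=
  f.continuous.integrable_of_hasCompactSupport
    (IsCompact.of_isClosed_subset isCompact_univ (isClosed_tsupport _) (subset_univ _))

lemma Phi_norm_sub (n : ℕ) (f g : C(Tor d, ℂ)) :
    ‖Phi ξ x n f - Phi ξ x n g‖ ≤ ‖f - g‖ := by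
  have h1 : Phi ξ x n f - Phi ξ x n g
      = (n : ℂ)⁻¹ * ∫ s in (0:ℝ)..(n:ℝ), ((f - g : C(Tor d, ℂ)) (orb ξ x s)) := by
    rw [Phi, Phi, ← mul_sub, ← intervalIntegral.integral_sub (intInt ξ x f n) (intInt ξ x g n)]
    simp
  rw [h1, norm_mul]
  have h2 : ‖∫ s in (0:ℝ)..(n:ℝ), ((f - g : C(Tor d, ℂ)) (orb ξ x s))‖
      ≤ ‖f - g‖ * |(n:ℝ) - 0| :=
    intervalIntegral.norm_integral_le_of_norm_le_const fun s _ =>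
      ContinuousMap.norm_coe_le_norm _ _
  rcases Nat.eq_zero_or_pos n with hn | hn
  · subst hn; simp
  · have hn' : (0:ℝ) < n := by exact_mod_cast hn
    rw [norm_inv, Complex.norm_natCast]
    calc ((n:ℝ))⁻¹ * ‖∫ s in (0:ℝ)..(n:ℝ), ((f - g : C(Tor d, ℂ)) (orb ξ x s))‖
        ≤ ((n:ℝ))⁻¹ * (‖f - g‖ * |(n:ℝ) - 0|) :=
          mul_le_mul_of_nonneg_left h2 (by positivity)
      _ = ‖f - g‖ := by
          rw [sub_zero, abs_of_pos hn']
          field_simp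

lemma Mf_norm_sub (f g : C(Tor d, ℂ)) : ‖Mf f - Mf g‖ ≤ ‖f - g‖ := by
  have h1 : Mf f - Mf g
      = (((2 * Real.pi) ^ d : ℝ) : ℂ)⁻¹ * ∫ y, ((f - g : C(Tor d, ℂ)) y) := by
    rw [Mf, Mf, ← mul_sub, ← integral_sub (cm_integrable f) (cm_integrable g)]
    simp
  rw [h1, norm_mul]
  have h2 : ‖∫ y, ((f - g : C(Tor d, ℂ)) y)‖ ≤ ‖f - g‖ * (volume (univ : Set (Tor d))).toReal :=
    norm_integral_le_of_norm_le_const (Eventually.of_forall fun y =>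
      ContinuousMap.norm_coe_le_norm _ _)
  rw [vol_tor] at h2
  have hpos : (0:ℝ) < (2 * Real.pi) ^ d := by positivity
  rw [norm_inv, Complex.norm_real, Real.norm_eq_abs, abs_of_pos hpos]
  calc (((2 * Real.pi) ^ d : ℝ))⁻¹ * ‖∫ y, ((f - g : C(Tor d, ℂ)) y)‖
      ≤ ((2 * Real.pi) ^ d)⁻¹ * (‖f - g‖ * (2 * Real.pi) ^ d) :=
        mul_le_mul_of_nonneg_left h2 (by positivity)
    _ = ‖f - g‖ := by field_simp

lemma ek_orb (k : Fin d → ℤ) (s : ℝ) :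
    ek k (orb ξ x s)
      = ek k x * Complex.exp ((Complex.I * ((∑ i, (k i : ℝ) * ξ i) : ℝ)) * s) := by
  have h1 : ∀ i : Fin d, fourier (k i) ((orb ξ x s) i)
      = fourier (k i) (x i) * Complex.exp ((Complex.I * (k i)) * ((s:ℂ) * (ξ i:ℂ))) := fun i => by
    show fourier (k i) (x i + ((s * ξ i : ℝ) : AddCircle (2 * Real.pi))) = _
    rw [fourier_pt_add, fourier_real_coe]
    norm_cast
  rw [ek_apply, Finset.prod_congr rfl (fun i _ => h1 i), Finset.prod_mul_distrib,
    ← Complex.exp_sum, ← ek_apply,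
    show (Complex.I * ((∑ i, (k i : ℝ) * ξ i : ℝ) : ℂ)) * (s : ℂ)
        = ∑ i, (Complex.I * (k i)) * ((s:ℂ) * (ξ i:ℂ)) by
      push_cast
      rw [Finset.mul_sum, Finset.sum_mul]
      exact Finset.sum_congr rfl fun i _ => by ring]

lemma tendsto_Phi_ek {k : Fin d → ℤ} (hk : k ≠ 0)
    (hK : (∑ i, (k i : ℝ) * ξ i) ≠ 0) :
    Tendsto (fun n => Phi ξ x n (ek k)) atTop (𝓝 (Mf (ek k))) := by
  have hMf : Mf (ek k) = 0 := by rw [Mf, integral_ek hk, mul_zero]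
  rw [hMf]
  set K : ℝ := ∑ i, (k i : ℝ) * ξ i with hKdef
  set c : ℂ := Complex.I * K with hc
  have hc0 : c ≠ 0 := mul_ne_zero Complex.I_ne_zero (by exact_mod_cast hK)
  have hval : ∀ n : ℕ, Phi ξ x n (ek k)
      = (n:ℂ)⁻¹ * (ek k x * ((Complex.exp (c * n) - Complex.exp (c * 0)) / c)) := fun n => by
    rw [Phi]
    congr 1
    rw [intervalIntegral.integral_congr (g := fun s : ℝ => ek k x * Complex.exp (c * s))
      (fun s _ => ek_orb ξ x k s), intervalIntegral.integral_const_mul,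
      integral_exp_mul_complex hc0]
    norm_cast
  apply squeeze_zero_norm (a := fun n : ℕ => (2 / ‖c‖) * (n:ℝ)⁻¹)
  · intro n
    rw [hval n, norm_mul, norm_mul, norm_ek, one_mul, norm_inv, Complex.norm_natCast]
    have h1 : ‖Complex.exp (c * n)‖ = 1 := by
      rw [Complex.norm_exp]
      have : (c * n).re = 0 := by simp [hc, Complex.mul_re]
      rw [this, Real.exp_zero]
    have h2 : ‖Complex.exp (c * 0)‖ = 1 := by simp
    have hnum : ‖(Complex.exp (c * n) - Complex.exp (c * 0)) / c‖ ≤ 2 / ‖c‖ := by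
      rw [norm_div]
      calc ‖Complex.exp (c * n) - Complex.exp (c * 0)‖ / ‖c‖
          ≤ (‖Complex.exp (c * n)‖ + ‖Complex.exp (c * 0)‖) / ‖c‖ := by
            gcongr
            exact norm_sub_le _ _
        _ = 2 / ‖c‖ := by rw [h1, h2]; norm_num
    calc ((n:ℝ))⁻¹ * ‖(Complex.exp (c * n) - Complex.exp (c * 0)) / c‖
        ≤ ((n:ℝ))⁻¹ * (2 / ‖c‖) := mul_le_mul_of_nonneg_left hnum (by positivity)
      _ = 2 / ‖c‖ * ((n:ℝ))⁻¹ := mul_comm _ _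
  · have := (tendsto_inv_atTop_nhds_zero_nat (𝕜 := ℝ)).const_mul (2 / ‖c‖)
    simpa using this

lemma tendsto_Phi_ek0 :
    Tendsto (fun n => Phi ξ x n (ek (0 : Fin d → ℤ))) atTop
      (𝓝 (Mf (ek (0 : Fin d → ℤ)))) := by
  have hne : ((2 * Real.pi) ^ d : ℝ) ≠ 0 := by positivity
  have hM : Mf (ek (0 : Fin d → ℤ)) = 1 := by
    rw [ek_zero, Mf]
    have h1 : ∫ y : Tor d, ((1 : C(Tor d, ℂ)) y) = (((2 * Real.pi) ^ d : ℝ) : ℂ) := by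
      simp only [ContinuousMap.one_apply]
      rw [MeasureTheory.integral_const, Complex.real_smul, mul_one, measureReal_def, vol_tor]
    rw [h1, ← Complex.ofReal_inv, ← Complex.ofReal_mul, inv_mul_cancel₀ hne,
      Complex.ofReal_one]
  rw [hM]
  apply Tendsto.congr' (f₁ := fun _ : ℕ => (1 : ℂ))
  · filter_upwards [eventually_ge_atTop 1] with n hn
    have hn0 : ((n:ℂ)) ≠ 0 := Nat.cast_ne_zero.mpr (by omega)
    rw [Phi, ek_zero]
    simp only [ContinuousMap.one_apply, intervalIntegral.integral_const, sub_zero,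
      Complex.real_smul, mul_one, Complex.ofReal_natCast]
    rw [inv_mul_cancel₀ hn0]
  · exact tendsto_const_nhds

lemma tendsto_Phi_span (hξ : ∀ k : Fin d → ℤ, k ≠ 0 → (∑ i, (k i : ℝ) * ξ i) ≠ 0)
    {f : C(Tor d, ℂ)} (hf : f ∈ Submodule.span ℂ (Set.range (ek (d := d)))) :
    Tendsto (fun n => Phi ξ x n f) atTop (𝓝 (Mf f)) := by
  induction hf using Submodule.span_induction with
  | mem f hf =>
    obtain ⟨k, rfl⟩ := hf
    by_cases hk : k = 0
    · subst hk; exact tendsto_Phi_ek0 ξ x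
    · exact tendsto_Phi_ek ξ x hk (hξ k hk)
  | zero =>
    have h1 : ∀ n : ℕ, Phi ξ x n (0 : C(Tor d, ℂ)) = 0 := fun n => by
      simp [Phi]
    have h2 : Mf (0 : C(Tor d, ℂ)) = 0 := by simp [Mf]
    rw [h2]
    exact tendsto_const_nhds.congr fun n => (h1 n).symm
  | add p q hp hq ihp ihq =>
    have hadd : ∀ n : ℕ, Phi ξ x n (p + q) = Phi ξ x n p + Phi ξ x n q := fun n => by
      rw [Phi, Phi, Phi, ← mul_add,
        ← intervalIntegral.integral_add (intInt ξ x p n) (intInt ξ x q n)]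
      simp
    have hMadd : Mf (p + q) = Mf p + Mf q := by
      rw [Mf, Mf, Mf, ← mul_add, ← integral_add (cm_integrable p) (cm_integrable q)]
      simp
    rw [hMadd]
    exact (ihp.add ihq).congr fun n => (hadd n).symm
  | smul c p hp ih =>
    have hs : ∀ n : ℕ, Phi ξ x n (c • p) = c * Phi ξ x n p := fun n => by
      rw [Phi, Phi]
      have : (fun s : ℝ => (c • p : C(Tor d, ℂ)) (orb ξ x s))
          = fun s : ℝ => c * p (orb ξ x s) := rfl
      rw [this, intervalIntegral.integral_const_mul]
      ring
    have hMs : Mf (c • p) = c * Mf p := by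
      rw [Mf, Mf]
      have : (fun y : Tor d => (c • p : C(Tor d, ℂ)) y) = fun y : Tor d => c * p y := rfl
      rw [this, MeasureTheory.integral_const_mul]
      ring
    rw [hMs]
    exact (ih.const_mul c).congr fun n => (hs n).symm

lemma tendsto_Phi (hξ : ∀ k : Fin d → ℤ, k ≠ 0 → (∑ i, (k i : ℝ) * ξ i) ≠ 0)
    (f : C(Tor d, ℂ)) :
    Tendsto (fun n => Phi ξ x n f) atTop (𝓝 (Mf f)) := by
  rw [Metric.tendsto_atTop]
  intro ε hε
  obtain ⟨g, hgmem, hgf⟩ := Metric.mem_closure_iff.mp (ek_dense f) (ε/3) (by linarith)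
  obtain ⟨N, hN⟩ := (Metric.tendsto_atTop.mp (tendsto_Phi_span ξ x hξ hgmem)) (ε/3) (by linarith)
  refine ⟨N, fun n hn => ?_⟩
  have h1 : dist (Phi ξ x n f) (Phi ξ x n g) ≤ ε/3 := by
    rw [dist_eq_norm]
    exact (Phi_norm_sub ξ x n f g).trans (by rw [← dist_eq_norm]; linarith [hgf])
  have h2 : dist (Mf g) (Mf f) ≤ ε/3 := by
    rw [dist_eq_norm]
    calc ‖Mf g - Mf f‖ ≤ ‖g - f‖ := Mf_norm_sub g f
      _ = dist g f := (dist_eq_norm _ _).symm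
      _ ≤ ε/3 := by rw [dist_comm]; linarith [hgf]
  calc dist (Phi ξ x n f) (Mf f)
      ≤ dist (Phi ξ x n f) (Phi ξ x n g) + dist (Phi ξ x n g) (Mf g) + dist (Mf g) (Mf f) :=
        dist_triangle4 _ _ _ _
    _ < ε/3 + ε/3 + ε/3 := by
        have h3 := hN n hn
        have h4 : dist (Phi ξ x n g) (Mf g) < ε/3 := h3
        linarith
    _ = ε := by ring

lemma tendsto_timeAvg (hξ : ∀ k : Fin d → ℤ, k ≠ 0 → (∑ i, (k i : ℝ) * ξ i) ≠ 0)
    (g : Tor d → ℝ) (hg : Continuous g) :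
    Tendsto (fun n : ℕ => ((n:ℝ))⁻¹ * ∫ s in (0:ℝ)..(n:ℝ), g (orb ξ x s)) atTop
      (𝓝 (((2 * Real.pi) ^ d)⁻¹ * ∫ y, g y)) := by
  set gC : C(Tor d, ℂ) := ⟨fun y => (g y : ℂ), Complex.continuous_ofReal.comp hg⟩ with hgC
  have h := tendsto_Phi ξ x hξ gC
  have hPhi : ∀ n : ℕ, Phi ξ x n gC
      = ((((n:ℝ))⁻¹ * ∫ s in (0:ℝ)..(n:ℝ), g (orb ξ x s) : ℝ) : ℂ) := fun n => by
    rw [Phi]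
    have h0 : (fun s : ℝ => gC (orb ξ x s)) = fun s : ℝ => ((g (orb ξ x s) : ℝ) : ℂ) := rfl
    rw [h0, intervalIntegral.integral_ofReal]
    push_cast
    ring
  have hMf : Mf gC = ((((2 * Real.pi) ^ d)⁻¹ * ∫ y, g y : ℝ) : ℂ) := by
    rw [Mf]
    have h0 : (fun y : Tor d => gC y) = fun y => ((g y : ℝ) : ℂ) := rfl
    have hint : Integrable g (volume : Measure (Tor d)) :=
      hg.integrable_of_hasCompactSupport
        (IsCompact.of_isClosed_subset isCompact_univ (isClosed_tsupport _) (subset_univ _))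
    have h1 : ∫ y : Tor d, ((g y : ℝ) : ℂ) = ((∫ y, g y : ℝ) : ℂ) := by
      rw [← Complex.ofRealCLM_apply (∫ y : Tor d, g y),
        ← ContinuousLinearMap.integral_comp_comm _ hint]
      simp [Complex.ofRealCLM_apply]
    rw [h0, h1]
    push_cast
    ring
  rw [show (fun n : ℕ => Phi ξ x n gC)
      = fun n : ℕ => ((((n:ℝ))⁻¹ * ∫ s in (0:ℝ)..(n:ℝ), g (orb ξ x s) : ℝ) : ℂ) from
    funext hPhi, hMf] at h
  have h2 := (Complex.continuous_re.tendsto _).comp h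
  simpa only [Function.comp_def, Complex.ofReal_re] using h2

end Orbit

section Main

abbrev Md (d : ℕ) := Tor d × (Fin d → ℝ)

def Tmap (s : ℝ) (p : Md d) : Md d :=
  (p.1 + fun i => ((s * p.2 i : ℝ) : AddCircle (2 * Real.pi)), p.2)

lemma Tmap_comp (s t : ℝ) (p : Md d) : Tmap s (Tmap t p) = Tmap (s + t) p := by
  unfold Tmap
  refine Prod.ext ?_ rfl
  show (p.1 + fun i => ((t * p.2 i : ℝ) : AddCircle (2 * Real.pi)))
      + (fun i => ((s * p.2 i : ℝ) : AddCircle (2 * Real.pi)))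
    = p.1 + fun i => (((s + t) * p.2 i : ℝ) : AddCircle (2 * Real.pi))
  rw [add_assoc]
  congr 1
  funext i
  show ((t * p.2 i : ℝ) : AddCircle (2 * Real.pi)) + ((s * p.2 i : ℝ) : AddCircle (2 * Real.pi))
    = (((s + t) * p.2 i : ℝ) : AddCircle (2 * Real.pi))
  rw [← QuotientAddGroup.mk_add]
  congr 1
  ring

lemma Tmap_zero (p : Md d) : Tmap 0 p = p := by
  unfold Tmap
  refine Prod.ext ?_ rfl
  show p.1 + (fun i => ((0 * p.2 i : ℝ) : AddCircle (2 * Real.pi))) = p.1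
  have : (fun i : Fin d => ((0 * p.2 i : ℝ) : AddCircle (2 * Real.pi))) = 0 := by
    funext i
    simp
  rw [this, add_zero]

lemma continuous_Tmap_joint : Continuous (fun q : ℝ × Md d => Tmap q.1 q.2) := by
  apply Continuous.prodMk
  · apply Continuous.add
    · exact continuous_fst.comp continuous_snd
    · exact continuous_pi fun i => (AddCircle.continuous_mk' _).comp
        (continuous_fst.mul ((continuous_apply i).comp (continuous_snd.comp continuous_snd)))
  · exact continuous_snd.comp continuous_snd

lemma continuous_Tmap (s : ℝ) : Continuous (Tmap (d := d) s) :=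
  continuous_Tmap_joint.comp (continuous_const.prodMk continuous_id)

def Thomeo (s : ℝ) : Md d ≃ₜ Md d where
  toFun := Tmap s
  invFun := Tmap (-s)
  left_inv := fun p => by rw [Tmap_comp]; simp [Tmap_zero]
  right_inv := fun p => by rw [Tmap_comp]; simp [Tmap_zero]
  continuous_toFun := continuous_Tmap s
  continuous_invFun := continuous_Tmap (-s)

end Main

end

/-- On the flat torus: if a finite invariant measure gives no mass to the resonant
set T^d × Ω, then integrals of a ∈ C_c equal integrals of its spatial average ā(ξ). -/
theorem stmt1 (d : ℕ)
    (μ : Measure ((Fin d → AddCircle (2 * Real.pi)) × (Fin d → ℝ)))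
    [IsFiniteMeasure μ]
    (hinv : ∀ s : ℝ, ∀ A : Set ((Fin d → AddCircle (2 * Real.pi)) × (Fin d → ℝ)),
      MeasurableSet A →
      μ ((fun p : (Fin d → AddCircle (2 * Real.pi)) × (Fin d → ℝ) =>
        (p.1 + fun i => ((s * p.2 i : ℝ) : AddCircle (2 * Real.pi)), p.2)) '' A) = μ A)
    (a : (Fin d → AddCircle (2 * Real.pi)) × (Fin d → ℝ) → ℝ)
    (ha : Continuous a) (hca : HasCompactSupport a)
    (hres : μ {p : (Fin d → AddCircle (2 * Real.pi)) × (Fin d → ℝ) |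
      ∃ k : Fin d → ℤ, k ≠ 0 ∧ ∑ i, (k i : ℝ) * p.2 i = 0} = 0) :
    ∫ p, a p ∂μ = ∫ p, (((2 * Real.pi) ^ d)⁻¹ * ∫ y, a (y, p.2)) ∂μ := by
  -- measure preservation
  have hMP : ∀ s : ℝ, MeasurePreserving (Tmap (d := d) s) μ μ := by
    intro s
    refine ⟨(continuous_Tmap s).measurable, Measure.ext fun A hA => ?_⟩
    rw [Measure.map_apply (continuous_Tmap s).measurable hA]
    have himg : Tmap (d := d) s ⁻¹' A = Tmap (-s) '' A := by
      ext p
      constructor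
      · intro hp
        exact ⟨Tmap s p, hp, by rw [Tmap_comp]; simp [Tmap_zero]⟩
      · rintro ⟨q, hq, rfl⟩
        show Tmap s (Tmap (-s) q) ∈ A
        rw [Tmap_comp]
        simpa [Tmap_zero] using hq
    rw [himg]
    exact hinv (-s) A hA
  have hcomp : ∀ s : ℝ, ∫ p, a (Tmap s p) ∂μ = ∫ p, a p ∂μ := fun s =>
    (hMP s).integral_comp (Thomeo s).measurableEmbedding a
  -- global bound
  obtain ⟨z₀, hz₀⟩ := (ha.norm).exists_forall_ge_of_hasCompactSupport hca.norm
  set C : ℝ := ‖a z₀‖ with hCdef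
  have hC : ∀ z, ‖a z‖ ≤ C := hz₀
  have hC0 : (0:ℝ) ≤ C := le_trans (norm_nonneg _) (hC ((0 : Tor d), (0 : Fin d → ℝ)))
  -- time averages
  set F : ℕ → Md d → ℝ :=
    fun n p => ((n:ℝ))⁻¹ * ∫ s in (0:ℝ)..(n:ℝ), a (Tmap s p) with hFdef
  have hjoint : Continuous (Function.uncurry fun (p : Md d) (s : ℝ) => a (Tmap s p)) :=
    ha.comp (continuous_Tmap_joint.comp (continuous_snd.prodMk continuous_fst))
  have hFcont : ∀ n : ℕ, Continuous (F n) := fun n =>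
    continuous_const.mul
      (intervalIntegral.continuous_parametric_intervalIntegral_of_continuous' hjoint 0 (n:ℝ))
  -- each time average integrates to ∫ a dμ
  have hFint : ∀ n : ℕ, 1 ≤ n → ∫ p, F n p ∂μ = ∫ p, a p ∂μ := by
    intro n hn
    have hn0 : (0:ℝ) < n := by exact_mod_cast hn
    haveI : IsFiniteMeasure (volume.restrict (Ioc (0:ℝ) (n:ℝ))) :=
      ⟨by rw [Measure.restrict_apply_univ, Real.volume_Ioc]; exact ENNReal.ofReal_lt_top⟩
    have hswap : ∫ p, (∫ s in Ioc (0:ℝ) (n:ℝ), a (Tmap s p)) ∂μ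
        = ∫ s in Ioc (0:ℝ) (n:ℝ), (∫ p, a (Tmap s p) ∂μ) := by
      apply MeasureTheory.integral_integral_swap
      apply Integrable.mono' (g := fun _ => C)
        (integrable_const C)
        ((ha.comp (continuous_Tmap_joint.comp
          (continuous_snd.prodMk continuous_fst))).aestronglyMeasurable)
      exact Eventually.of_forall fun q => hC _
    have h1 : ∀ p : Md d, ∫ s in (0:ℝ)..(n:ℝ), a (Tmap s p)
        = ∫ s in Ioc (0:ℝ) (n:ℝ), a (Tmap s p) := fun p =>
      intervalIntegral.integral_of_le hn0.le
    calc ∫ p, F n p ∂μ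
        = ((n:ℝ))⁻¹ * ∫ p, (∫ s in Ioc (0:ℝ) (n:ℝ), a (Tmap s p)) ∂μ := by
          rw [hFdef, ← MeasureTheory.integral_const_mul]
          exact integral_congr_ae (Eventually.of_forall fun p => by
            show ((n:ℝ))⁻¹ * ∫ s in (0:ℝ)..(n:ℝ), a (Tmap s p)
              = ((n:ℝ))⁻¹ * ∫ s in Ioc (0:ℝ) (n:ℝ), a (Tmap s p)
            rw [h1 p])
      _ = ((n:ℝ))⁻¹ * ∫ s in Ioc (0:ℝ) (n:ℝ), (∫ p, a (Tmap s p) ∂μ) := by rw [hswap]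
      _ = ((n:ℝ))⁻¹ * ∫ s in Ioc (0:ℝ) (n:ℝ), (∫ p, a p ∂μ) := by
          congr 1
          exact setIntegral_congr_ae measurableSet_Ioc
            (Eventually.of_forall fun s _ => hcomp s)
      _ = ∫ p, a p ∂μ := by
          rw [setIntegral_const, measureReal_def, Real.volume_Ioc, sub_zero, smul_eq_mul,
            ENNReal.toReal_ofReal hn0.le, ← mul_assoc, inv_mul_cancel₀ hn0.ne', one_mul]
  -- a.e. convergence of time averages
  have hae : ∀ᵐ p ∂μ, Tendsto (fun n : ℕ => F n p) atTop
      (𝓝 (((2 * Real.pi) ^ d)⁻¹ * ∫ y, a (y, p.2))) := by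
    rw [ae_iff]
    apply measure_mono_null ?_ hres
    intro p hp
    simp only [mem_setOf_eq] at hp ⊢
    by_contra hcon
    push_neg at hcon
    exact hp (tendsto_timeAvg p.2 p.1 (fun k hk => hcon k hk)
      (fun y => a (y, p.2)) (ha.comp (continuous_id.prodMk continuous_const)))
  -- dominated convergence
  have hDCT := MeasureTheory.tendsto_integral_of_dominated_convergence
    (F := F) (f := fun p => ((2 * Real.pi) ^ d)⁻¹ * ∫ y, a (y, p.2))
    (bound := fun _ => C)
    (fun n => (hFcont n).aestronglyMeasurable)
    (integrable_const C)
    (fun n => Eventually.of_forall fun p => ?_)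
    hae
  · have hconst : (fun n : ℕ => ∫ p, F n p ∂μ) =ᶠ[atTop] fun _ => ∫ p, a p ∂μ := by
      filter_upwards [eventually_ge_atTop 1] with n hn
      exact hFint n hn
    exact (tendsto_nhds_unique (hDCT.congr' hconst) tendsto_const_nhds).symm
  -- the uniform bound on time averages
  · rw [hFdef]
    rcases Nat.eq_zero_or_pos n with hn | hn
    · subst hn; simpa using hC0
    · have hn0 : (0:ℝ) < n := by exact_mod_cast hn
      have hb : ‖∫ s in (0:ℝ)..(n:ℝ), a (Tmap s p)‖ ≤ C * |(n:ℝ) - 0| :=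
        intervalIntegral.norm_integral_le_of_norm_le_const fun s _ => hC _
      rw [norm_mul, norm_inv, Real.norm_natCast]
      calc ((n:ℝ))⁻¹ * ‖∫ s in (0:ℝ)..(n:ℝ), a (Tmap s p)‖
          ≤ ((n:ℝ))⁻¹ * (C * |(n:ℝ) - 0|) := mul_le_mul_of_nonneg_left hb (by positivity)
        _ = C := by rw [sub_zero, abs_of_pos hn0]; field_simp
end
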